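/- For integers k ≥ 2 and t ≥ 2, the wreath product S_k ≀ S_t is 2-generated, i.e., d(S_k ≀ S_t) = 2. -/

import Mathlib

/-- the automorphism of `(S_k)^t` given by permuting the `t` coordinates by `σ` -/
def wreathAut (k t : ℕ) (σ : Equiv.Perm (Fin t)) :
    (Fin t → Equiv.Perm (Fin k)) ≃* (Fin t → Equiv.Perm (Fin k)) where
  toFun f := f ∘ σ.symm
  invFun f := f ∘ σ
  left_inv f := by ext i : 1; simp
  right_inv f := by ext i : 1; simp
  map_mul' f g := rfl

/-- the action homomorphism `S_t →* Aut((S_k)^t)` defining the wreath product `S_k ≀ S_t` -/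
def wreathPhi (k t : ℕ) : Equiv.Perm (Fin t) →* MulAut (Fin t → Equiv.Perm (Fin k)) :=
  MonoidHom.mk' (fun σ => wreathAut k t σ) (by
    intro σ τ
    ext f i
    rfl)

/-- the wreath product `S_k ≀ S_t` -/
abbrev WreathSS (k t : ℕ) : Type :=
  (Fin t → Equiv.Perm (Fin k)) ⋊[wreathPhi k t] Equiv.Perm (Fin t)

open Equiv Equiv.Perm SemidirectProduct
open Fin.NatCast

namespace WreathAux

variable {k t : ℕ}

theorem phi_apply (σ : Equiv.Perm (Fin t)) (f : Fin t → Equiv.Perm (Fin k)) (i : Fin t) :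
    wreathPhi k t σ f i = f (σ.symm i) := rfl

theorem phi_mulSingle (σ : Equiv.Perm (Fin t)) (j : Fin t) (b : Equiv.Perm (Fin k)) :
    wreathPhi k t σ (Pi.mulSingle j b) = Pi.mulSingle (σ j) b := by
  funext i
  rw [phi_apply, Pi.mulSingle_apply, Pi.mulSingle_apply]
  congr 1
  simp [Equiv.eq_symm_apply, eq_comm]

theorem mk_mul (f g : Fin t → Equiv.Perm (Fin k)) (σ τ : Equiv.Perm (Fin t)) :
    (⟨f, σ⟩ * ⟨g, τ⟩ : WreathSS k t) = ⟨f * wreathPhi k t σ g, σ * τ⟩ := rfl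

theorem conj_mk (f : Fin t → Equiv.Perm (Fin k)) (σ : Equiv.Perm (Fin t))
    (j : Fin t) (b : Equiv.Perm (Fin k)) :
    (⟨f, σ⟩ : WreathSS k t) * ⟨Pi.mulSingle j b, 1⟩ * (⟨f, σ⟩ : WreathSS k t)⁻¹ =
      ⟨Pi.mulSingle (σ j) (f (σ j) * b * (f (σ j))⁻¹), 1⟩ := by
  apply SemidirectProduct.ext
  · show (f * wreathPhi k t σ (Pi.mulSingle j b)) * wreathPhi k t (σ * 1) ((⟨f, σ⟩ : WreathSS k t)⁻¹).left = _
    rw [inv_left]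
    funext i
    simp only [Pi.mul_apply, phi_apply, phi_mulSingle, Pi.mulSingle_apply, Pi.inv_apply]
    show f i * _ * (f _)⁻¹ = _
    rcases eq_or_ne i (σ j) with h | h
    · subst h
      simp [Equiv.Perm.inv_def]
    · simp [h, Equiv.Perm.inv_def, Equiv.Perm.mul_symm]
  · show σ * 1 * (σ * 1)⁻¹ = 1
    group

theorem mk_base_mul (f g : Fin t → Equiv.Perm (Fin k)) :
    (⟨f, 1⟩ * ⟨g, 1⟩ : WreathSS k t) = ⟨f * g, 1⟩ := by
  rw [mk_mul]
  apply SemidirectProduct.ext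
  · show f * wreathPhi k t 1 g = f * g
    rw [map_one]
    rfl
  · show (1 : Equiv.Perm (Fin t)) * 1 = 1
    rw [one_mul]

theorem mk_base_inv (f : Fin t → Equiv.Perm (Fin k)) :
    (⟨f, 1⟩ : WreathSS k t)⁻¹ = ⟨f⁻¹, 1⟩ := by
  apply SemidirectProduct.ext
  · show wreathPhi k t (1 : Equiv.Perm (Fin t))⁻¹ f⁻¹ = f⁻¹
    rw [inv_one, map_one]
    rfl
  · show (1 : Equiv.Perm (Fin t))⁻¹ = 1
    exact inv_one

end WreathAux

theorem WreathAux.aux_rotate_pow {n : ℕ} (m : ℕ) (j : Fin (n+2)) :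
    ((finRotate (n+2))^m) j = j + (m : Fin (n+2)) := by
  induction m with
  | zero => simp
  | succ m ih =>
    rw [pow_succ', Equiv.Perm.mul_apply, ih, finRotate_succ_apply]
    push_cast
    rw [add_assoc]

theorem WreathAux.aux_rotate_pow_zero (m : ℕ) : ((finRotate (n+2))^m) (0 : Fin (n+2)) = (m : Fin (n+2)) := by
  induction m with
  | zero => simp
  | succ m ih =>
    rw [pow_succ', Equiv.Perm.mul_apply, ih, finRotate_succ_apply]
    push_cast
    ring

theorem WreathAux.aux_sc_zero (m : ℕ) :
    ((Equiv.swap (0 : Fin (n+2)) 1 * finRotate (n+2))^m) (0 : Fin (n+2)) = 0 := by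
  induction m with
  | zero => rfl
  | succ m ih =>
    rw [pow_succ', Equiv.Perm.mul_apply, ih, Equiv.Perm.mul_apply, finRotate_succ_apply]
    simp

theorem WreathAux.aux_sc_one (m : ℕ) (hm : m ≤ n) :
    ((Equiv.swap (0 : Fin (n+2)) 1 * finRotate (n+2))^m) (1 : Fin (n+2)) = ⟨m+1, by omega⟩ := by
  induction m with
  | zero => simp [Fin.ext_iff]
  | succ m ih =>
    rw [pow_succ', Equiv.Perm.mul_apply, ih (by omega), Equiv.Perm.mul_apply, finRotate_succ_apply]
    have h1 : (⟨m+1, by omega⟩ : Fin (n+2)) + 1 = ⟨m+2, by omega⟩ := by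
      rw [Fin.ext_iff, Fin.val_add_one]
      simp [Fin.ext_iff]
      omega
    rw [h1, Equiv.swap_apply_of_ne_of_ne] <;> simp [Fin.ext_iff]

theorem WreathAux.aux_sc_pow_eq_one :
    ((Equiv.swap (0 : Fin (n+2)) 1 * finRotate (n+2))^(n+1)) = 1 := by
  set c := Equiv.swap (0 : Fin (n+2)) 1 * finRotate (n+2) with hc
  have h1 : (c^(n+1)) (1 : Fin (n+2)) = 1 := by
    rw [pow_succ', Equiv.Perm.mul_apply, WreathAux.aux_sc_one n le_rfl, hc, Equiv.Perm.mul_apply]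
    have : (⟨n+1, by omega⟩ : Fin (n+2)) = Fin.last (n+1) := rfl
    rw [this, finRotate_last, Equiv.swap_apply_left]
  apply Equiv.ext (fun j => ?_)
  rw [Equiv.Perm.one_apply]
  rcases eq_or_ne j 0 with rfl | hj
  · rw [WreathAux.aux_sc_zero]
  · have hv : (j : ℕ) - 1 ≤ n := by omega
    have hj1 : 1 ≤ (j : ℕ) := by
      rcases Nat.eq_zero_or_pos (j : ℕ) with h | h
      · exact absurd (Fin.ext h) hj
      · omega
    have hj2 : (c^((j : ℕ) - 1)) (1 : Fin (n+2)) = j := by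
      rw [WreathAux.aux_sc_one _ hv]; exact Fin.ext (by simp; omega)
    calc (c^(n+1)) j = (c^(n+1)) ((c^((j:ℕ)-1)) 1) := by rw [hj2]
    _ = (c^(n+1) * c^((j:ℕ)-1)) 1 := rfl
    _ = (c^((j:ℕ)-1) * c^(n+1)) 1 := by rw [pow_mul_comm]
    _ = (c^((j:ℕ)-1)) 1 := by rw [Equiv.Perm.mul_apply, h1]
    _ = j := hj2
  -- also: `(1 : Perm _) j = j` should close by rfl? the ext goal shape

namespace WreathAux
section params
variable (k' t' : ℕ)

def vv : Equiv.Perm (Fin (k'+2)) := finRotate (k'+2)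
def ττ : Equiv.Perm (Fin (k'+2)) := Equiv.swap 0 1
def uu : Equiv.Perm (Fin (k'+2)) := ττ k' * (vv k')^(t'+1)
def γγ : Equiv.Perm (Fin (t'+2)) := finRotate (t'+2)
def ss : Equiv.Perm (Fin (t'+2)) := Equiv.swap 0 1
def xx : WreathSS (k'+2) (t'+2) := ⟨Pi.mulSingle 0 (uu k' t'), γγ t'⟩
def yy : WreathSS (k'+2) (t'+2) := ⟨Pi.mulSingle 0 (vv k'), ss t'⟩

theorem xx_pow (m : ℕ) (hm : m ≤ t'+2) :
    (xx k' t')^m = ⟨fun j => if (j:ℕ) < m then uu k' t' else 1, (γγ t')^m⟩ := by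
  induction m with
  | zero =>
    apply SemidirectProduct.ext
    · funext j; simp
    · simp
  | succ m ih =>
    rw [pow_succ, ih (by omega), xx, mk_mul, phi_mulSingle]
    apply SemidirectProduct.ext
    · show (fun (j : Fin (t'+2)) => if (j:ℕ) < m then uu k' t' else 1) * Pi.mulSingle (((γγ t')^m) 0) (uu k' t')
          = fun (j : Fin (t'+2)) => if (j:ℕ) < m + 1 then uu k' t' else 1
      rw [γγ, aux_rotate_pow_zero]
      funext j
      rcases eq_or_ne (j : ℕ) m with h | h
      · have hj : ((m : ℕ) : Fin (t'+2)) = j := by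
          rw [Fin.ext_iff, Fin.val_cast_of_lt (by omega)]; omega
        simp only [Pi.mul_apply, Pi.mulSingle_apply, if_pos hj.symm, h, lt_irrefl, if_false,
          one_mul, if_pos (Nat.lt_succ_self m)]
      · have hj : j ≠ ((m : ℕ) : Fin (t'+2)) := by
          rw [Ne, Fin.ext_iff, Fin.val_cast_of_lt (by omega)]; omega
        simp only [Pi.mul_apply, Pi.mulSingle_apply, if_neg hj, mul_one]
        have : ((j:ℕ) < m + 1) ↔ ((j:ℕ) < m) := by omega
        exact (if_congr this rfl rfl).symm
    · show (γγ t')^m * γγ t' = (γγ t')^(m+1)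
      rw [pow_succ]

theorem zz_eq : (xx k' t')^(t'+2) = ⟨fun _ => uu k' t', 1⟩ := by
  rw [xx_pow k' t' (t'+2) le_rfl]
  apply SemidirectProduct.ext
  · show (fun (j : Fin (t'+2)) => if (j:ℕ) < t'+2 then uu k' t' else 1) = fun _ => uu k' t'
    funext j
    rw [if_pos j.isLt]
  · show (γγ t')^(t'+2) = 1
    apply Equiv.ext (fun j => ?_)
    rw [γγ, aux_rotate_pow, Fin.natCast_self, add_zero, Equiv.Perm.one_apply]

theorem yx_eq : yy k' t' * xx k' t' =
    ⟨Pi.mulSingle (0 : Fin (t'+2)) (vv k') * Pi.mulSingle (1 : Fin (t'+2)) (uu k' t'), ss t' * γγ t'⟩ := by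
  have h : ss t' (0 : Fin (t'+2)) = 1 := Equiv.swap_apply_left 0 1
  rw [yy, xx, mk_mul, phi_mulSingle, h]
theorem yx_pow (m : ℕ) (hm : m ≤ t'+1) :
    (yy k' t' * xx k' t')^m =
      ⟨fun j => if j = 0 then (vv k')^m else if (j:ℕ) < m+1 then uu k' t' else 1,
        (ss t' * γγ t')^m⟩ := by
  induction m with
  | zero =>
    apply SemidirectProduct.ext
    · show (1 : Fin (t'+2) → Equiv.Perm (Fin (k'+2)))
        = fun (j : Fin (t'+2)) => if j = 0 then (vv k')^0 else if (j:ℕ) < 0+1 then uu k' t' else 1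
      funext j
      rcases eq_or_ne j 0 with rfl | hj
      · simp
      · have hv : (j:ℕ) ≠ 0 := fun h => hj (Fin.ext (by rw [h, Fin.val_zero]))
        have : ¬ ((j:ℕ) < 0+1) := by omega
        simp [hj, this]
    · show (1 : Equiv.Perm (Fin (t'+2))) = (ss t' * γγ t')^0
      rw [pow_zero]
  | succ m ih =>
    rw [pow_succ, ih (by omega), yx_eq, mk_mul, map_mul, phi_mulSingle, phi_mulSingle]
    have hz : ((ss t' * γγ t')^m) (0 : Fin (t'+2)) = 0 := by
      rw [ss, γγ]; exact aux_sc_zero m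
    have ho : ((ss t' * γγ t')^m) (1 : Fin (t'+2)) = ⟨m+1, by omega⟩ := by
      rw [ss, γγ]; exact aux_sc_one m (by omega)
    apply SemidirectProduct.ext
    · show (fun (j : Fin (t'+2)) => if j = 0 then (vv k')^m else if (j:ℕ) < m+1 then uu k' t' else 1) *
        (Pi.mulSingle (((ss t' * γγ t')^m) (0:Fin (t'+2))) (vv k') *
          Pi.mulSingle (((ss t' * γγ t')^m) (1:Fin (t'+2))) (uu k' t'))
        = fun (j : Fin (t'+2)) => if j = 0 then (vv k')^(m+1) else if (j:ℕ) < (m+1)+1 then uu k' t' else 1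
      rw [hz, ho]
      funext j
      have hne0 : (⟨m+1, by omega⟩ : Fin (t'+2)) ≠ 0 := by
        rw [Ne, Fin.ext_iff]; simp
      rcases eq_or_ne j 0 with rfl | hj
      · simp [Pi.mul_apply, Pi.mulSingle_apply, Ne.symm hne0, pow_succ]
      · rcases eq_or_ne j (⟨m+1, by omega⟩ : Fin (t'+2)) with rfl | hj2
        · simp [Pi.mul_apply, Pi.mulSingle_apply, hj, Nat.lt_succ_self]
        · have hv : (j : ℕ) ≠ m+1 := fun h => hj2 (Fin.ext h)
          by_cases hlt : (j:ℕ) < m+1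
          · simp [Pi.mul_apply, Pi.mulSingle_apply, hj, hj2, hlt,
              (by omega : (j:ℕ) < (m+1)+1)]
            intro h; exact absurd h (by omega)
          · simp only [Pi.mul_apply, Pi.mulSingle_apply, if_neg hj, if_neg hj2, if_neg hlt,
              if_neg (Ne.symm hj), mul_one, one_mul]
            rw [if_neg (show ¬ ((j:ℕ) < m+1+1) by omega)]
    · show (ss t' * γγ t')^m * (ss t' * γγ t') = (ss t' * γγ t')^(m+1)
      rw [pow_succ]

theorem yx_tpow : (yy k' t' * xx k' t')^(t'+1) =
    ⟨fun j => if j = 0 then (vv k')^(t'+1) else uu k' t', 1⟩ := by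
  rw [yx_pow k' t' (t'+1) le_rfl]
  apply SemidirectProduct.ext
  · show (fun (j : Fin (t'+2)) => if j = 0 then (vv k')^(t'+1) else if (j:ℕ) < (t'+1)+1 then uu k' t' else 1)
      = fun (j : Fin (t'+2)) => if j = 0 then (vv k')^(t'+1) else uu k' t'
    funext j
    rcases eq_or_ne j 0 with rfl | hj
    · simp
    · rw [if_neg hj, if_neg hj, if_pos (by omega : (j:ℕ) < (t'+1)+1)]
  · show (ss t' * γγ t')^(t'+1) = 1
    rw [ss, γγ]
    exact aux_sc_pow_eq_one

theorem d0_tau : (yy k' t' * xx k' t')^(t'+1) * ((xx k' t')^(t'+2))⁻¹ =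
    (⟨Pi.mulSingle (0 : Fin (t'+2)) (ττ k'), 1⟩ : WreathSS (k'+2) (t'+2)) := by
  rw [yx_tpow, zz_eq, mk_base_inv, mk_base_mul]
  congr 1
  funext j
  rw [Pi.mul_apply, Pi.inv_apply]
  rcases eq_or_ne j 0 with rfl | hj
  · rw [if_pos rfl, Pi.mulSingle_apply, if_pos rfl, uu, mul_inv_rev, ← mul_assoc,
      mul_inv_cancel, one_mul, ττ, Equiv.swap_inv]
  · rw [if_neg hj, Pi.mulSingle_apply, if_neg hj, mul_inv_cancel]

-- generation of the top symmetric group factors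
theorem closure_gs : Subgroup.closure ({γγ t', ss t'} : Set (Equiv.Perm (Fin (t'+2)))) = ⊤ := by
  have h := Equiv.Perm.closure_cycle_adjacent_swap (σ := finRotate (t'+2))
    isCycle_finRotate support_finRotate 0
  have h2 : Equiv.swap (0 : Fin (t'+2)) (finRotate (t'+2) 0) = ss t' := by
    rw [ss]
    congr 1
  rw [h2] at h
  exact h

theorem closure_uv : Subgroup.closure ({uu k' t', vv k'} : Set (Equiv.Perm (Fin (k'+2)))) = ⊤ := by
  have h := Equiv.Perm.closure_cycle_adjacent_swap (σ := finRotate (k'+2))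
    isCycle_finRotate support_finRotate 0
  have h2 : Equiv.swap (0 : Fin (k'+2)) (finRotate (k'+2) 0) = ττ k' := by
    rw [ττ]
    congr 1
  rw [h2] at h
  rw [eq_top_iff, ← h, Subgroup.closure_le]
  intro g hg
  rcases hg with rfl | hg
  · -- finRotate = vv ∈ closure {uu, vv}
    exact Subgroup.subset_closure (Set.mem_insert_of_mem _ rfl)
  · -- g = ττ
    rcases hg with rfl
    have hu : uu k' t' ∈ Subgroup.closure ({uu k' t', vv k'} : Set (Equiv.Perm (Fin (k'+2)))) :=
      Subgroup.subset_closure (Set.mem_insert _ _)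
    have hv : vv k' ∈ Subgroup.closure ({uu k' t', vv k'} : Set (Equiv.Perm (Fin (k'+2)))) :=
      Subgroup.subset_closure (Set.mem_insert_of_mem _ rfl)
    have : ττ k' = uu k' t' * ((vv k')^(t'+1))⁻¹ := by
      rw [uu, mul_assoc, mul_inv_cancel, mul_one]
    rw [vv] at hv
    show Equiv.swap (0 : Fin (k'+2)) 1 ∈ _
    rw [← ττ, this]
    exact Subgroup.mul_mem _ hu (Subgroup.inv_mem _ (Subgroup.pow_mem _ (by rw [vv]; exact hv) _))

theorem closure_top : Subgroup.closure ({xx k' t', yy k' t'} : Set (WreathSS (k'+2) (t'+2))) = ⊤ := by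
  set H := Subgroup.closure ({xx k' t', yy k' t'} : Set (WreathSS (k'+2) (t'+2))) with hH
  have hx : xx k' t' ∈ H := Subgroup.subset_closure (Set.mem_insert _ _)
  have hy : yy k' t' ∈ H := Subgroup.subset_closure (Set.mem_insert_of_mem _ rfl)
  -- surjectivity onto S_t
  have hsurj : ∀ σ : Equiv.Perm (Fin (t'+2)), ∃ h ∈ H, h.right = σ := by
    intro σ
    have hmap : Subgroup.closure ({γγ t', ss t'} : Set (Equiv.Perm (Fin (t'+2)))) ≤
        Subgroup.map (SemidirectProduct.rightHom) H := by
      rw [Subgroup.closure_le]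
      intro g hg
      rcases hg with rfl | hg
      · exact ⟨xx k' t', hx, rfl⟩
      · rcases hg with rfl
        exact ⟨yy k' t', hy, rfl⟩
    have : σ ∈ Subgroup.map (SemidirectProduct.rightHom) H := by
      apply hmap
      rw [closure_gs]
      trivial
    rcases this with ⟨h, hh, hhr⟩
    exact ⟨h, hh, hhr⟩
  -- base single elements
  have hz : (⟨fun _ => uu k' t', 1⟩ : WreathSS (k'+2) (t'+2)) ∈ H := by
    rw [← zz_eq]; exact Subgroup.pow_mem _ hx _
  have hzi : (⟨fun _ => (uu k' t')⁻¹, 1⟩ : WreathSS (k'+2) (t'+2)) ∈ H := by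
    have := Subgroup.inv_mem _ hz
    rwa [mk_base_inv] at this
  have hp : (⟨Pi.mulSingle (0 : Fin (t'+2)) (vv k') * Pi.mulSingle (1 : Fin (t'+2)) (vv k'), 1⟩ :
      WreathSS (k'+2) (t'+2)) ∈ H := by
    have h2 : yy k' t' * yy k' t' = ⟨Pi.mulSingle (0 : Fin (t'+2)) (vv k') *
        Pi.mulSingle (1 : Fin (t'+2)) (vv k'), 1⟩ := by
      rw [yy, mk_mul, phi_mulSingle]
      have h0 : ss t' (0 : Fin (t'+2)) = 1 := Equiv.swap_apply_left 0 1
      have h1 : ss t' * ss t' = 1 := Equiv.swap_mul_self 0 1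
      rw [h0, h1]
    rw [← h2]
    exact Subgroup.mul_mem _ hy hy
  have hpi : (⟨(Pi.mulSingle (0 : Fin (t'+2)) (vv k') * Pi.mulSingle (1 : Fin (t'+2)) (vv k'))⁻¹, 1⟩ :
      WreathSS (k'+2) (t'+2)) ∈ H := by
    have := Subgroup.inv_mem _ hp
    rwa [mk_base_inv] at this
  have hd0 : (⟨Pi.mulSingle (0 : Fin (t'+2)) (ττ k'), 1⟩ : WreathSS (k'+2) (t'+2)) ∈ H := by
    rw [← d0_tau]
    exact Subgroup.mul_mem _ (Subgroup.pow_mem _ (Subgroup.mul_mem _ hy hx) _)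
      (Subgroup.inv_mem _ (Subgroup.pow_mem _ hx _))
  -- conjugation closure at coordinate 0
  have hconj : ∀ (f : Fin (t'+2) → Equiv.Perm (Fin (k'+2))) (b : Equiv.Perm (Fin (k'+2))),
      (⟨f, 1⟩ : WreathSS (k'+2) (t'+2)) ∈ H →
      (⟨Pi.mulSingle (0 : Fin (t'+2)) b, 1⟩ : WreathSS (k'+2) (t'+2)) ∈ H →
      (⟨Pi.mulSingle (0 : Fin (t'+2)) (f 0 * b * (f 0)⁻¹), 1⟩ : WreathSS (k'+2) (t'+2)) ∈ H := by
    intro f b hf hb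
    have := conj_mk f 1 (0 : Fin (t'+2)) b
    rw [Equiv.Perm.one_apply] at this
    rw [← this]
    exact Subgroup.mul_mem _ (Subgroup.mul_mem _ hf hb) (Subgroup.inv_mem _ hf)
  -- the subgroup of conjugators
  let CC : Subgroup (Equiv.Perm (Fin (k'+2))) :=
    { carrier := {g | ∀ b : Equiv.Perm (Fin (k'+2)),
        ((⟨Pi.mulSingle (0 : Fin (t'+2)) b, 1⟩ : WreathSS (k'+2) (t'+2)) ∈ H ↔
         (⟨Pi.mulSingle (0 : Fin (t'+2)) (g * b * g⁻¹), 1⟩ : WreathSS (k'+2) (t'+2)) ∈ H)}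
      one_mem' := by intro b; simp
      mul_mem' := by
        intro g1 g2 hg1 hg2 b
        have h1 := hg2 b
        have h2 := hg1 (g2 * b * g2⁻¹)
        have he : g1 * (g2 * b * g2⁻¹) * g1⁻¹ = g1 * g2 * b * (g1 * g2)⁻¹ := by group
        rw [he] at h2
        exact h1.trans h2
      inv_mem' := by
        intro g hg b
        have := hg (g⁻¹ * b * g)
        have he : g * (g⁻¹ * b * g) * g⁻¹ = b := by group
        rw [he] at this
        have he2 : g⁻¹ * b * (g⁻¹)⁻¹ = g⁻¹ * b * g := by group
        rw [he2]
        exact this.symm }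
  have hCCu : uu k' t' ∈ CC := by
    intro b
    constructor
    · intro hb
      have := hconj (fun _ => uu k' t') b hz hb
      simpa using this
    · intro hb
      have := hconj (fun _ => (uu k' t')⁻¹) (uu k' t' * b * (uu k' t')⁻¹) hzi hb
      have he : ((fun (_ : Fin (t'+2)) => (uu k' t')⁻¹) (0 : Fin (t'+2))) *
          (uu k' t' * b * (uu k' t')⁻¹) *
          (((fun (_ : Fin (t'+2)) => (uu k' t')⁻¹) (0 : Fin (t'+2))))⁻¹ = b := by
        show (uu k' t')⁻¹ * (uu k' t' * b * (uu k' t')⁻¹) * ((uu k' t')⁻¹)⁻¹ = b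
        group
      rwa [he] at this
  have hg0 : ((Pi.mulSingle (0 : Fin (t'+2)) (vv k') * Pi.mulSingle (1 : Fin (t'+2)) (vv k') :
      Fin (t'+2) → Equiv.Perm (Fin (k'+2)))) (0 : Fin (t'+2)) = vv k' := by
    have h01 : (0 : Fin (t'+2)) ≠ 1 := by
      rw [Ne, Fin.ext_iff]; simp
    simp [Pi.mul_apply, Pi.mulSingle_apply, h01]
  have hCCv : vv k' ∈ CC := by
    intro b
    constructor
    · intro hb
      have := hconj _ b hp hb
      rwa [hg0] at this
    · intro hb
      have := hconj _ ((vv k') * b * (vv k')⁻¹) hpi hb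
      rw [Pi.inv_apply, hg0] at this
      have he : (vv k')⁻¹ * (vv k' * b * (vv k')⁻¹) * ((vv k')⁻¹)⁻¹ = b := by group
      rwa [he] at this
  have hCCall : ∀ g : Equiv.Perm (Fin (k'+2)), g ∈ CC := by
    intro g
    have : Subgroup.closure ({uu k' t', vv k'} : Set (Equiv.Perm (Fin (k'+2)))) ≤ CC := by
      rw [Subgroup.closure_le]
      intro w hw
      rcases hw with rfl | hw
      · exact hCCu
      · rcases hw with rfl
        exact hCCv
    apply this
    rw [closure_uv]
    trivial
  -- all single swaps at coordinate 0
  have hswap : ∀ a b : Fin (k'+2), a ≠ b →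
      (⟨Pi.mulSingle (0 : Fin (t'+2)) (Equiv.swap a b), 1⟩ : WreathSS (k'+2) (t'+2)) ∈ H := by
    intro a b hab
    -- find g with g 0 = a, g 1 = b
    set c : Fin (k'+2) := Equiv.swap 0 a b with hc
    have hcne : c ≠ 0 := by
      intro h
      rw [hc] at h
      have : b = a := by
        have := congrArg (Equiv.swap (0 : Fin (k'+2)) a) h
        rwa [Equiv.swap_apply_self, Equiv.swap_apply_left] at this
      exact hab this.symm
    set g : Equiv.Perm (Fin (k'+2)) := Equiv.swap 0 a * Equiv.swap 1 c with hg
    have hga : g 0 = a := by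
      rw [hg, Equiv.Perm.mul_apply, Equiv.swap_apply_of_ne_of_ne (by simp [Fin.ext_iff]) (Ne.symm hcne),
        Equiv.swap_apply_left]
    have hgb : g 1 = b := by
      rw [hg, Equiv.Perm.mul_apply, Equiv.swap_apply_left, hc, Equiv.swap_apply_self]
    have hkey : Equiv.swap a b = g * ττ k' * g⁻¹ := by
      rw [← hga, ← hgb, ττ, Equiv.swap_apply_apply]
    rw [hkey]
    have := (hCCall g (ττ k')).mp hd0
    exact this
  -- every single element at coordinate 0
  have hall0 : ∀ b : Equiv.Perm (Fin (k'+2)),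
      (⟨Pi.mulSingle (0 : Fin (t'+2)) b, 1⟩ : WreathSS (k'+2) (t'+2)) ∈ H := by
    intro b
    refine Equiv.Perm.swap_induction_on b ?_ ?_
    ·
      have : (⟨Pi.mulSingle (0 : Fin (t'+2)) (1 : Equiv.Perm (Fin (k'+2))), 1⟩ :
          WreathSS (k'+2) (t'+2)) = 1 := by
        apply SemidirectProduct.ext
        · rw [SemidirectProduct.one_left]
          exact Pi.mulSingle_one _
        · rfl
      rw [this]
      exact Subgroup.one_mem _
    · intro f a b hab hf
      have hsplit : (⟨Pi.mulSingle (0 : Fin (t'+2)) (Equiv.swap a b * f), 1⟩ :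
          WreathSS (k'+2) (t'+2)) =
          ⟨Pi.mulSingle (0 : Fin (t'+2)) (Equiv.swap a b), 1⟩ *
          ⟨Pi.mulSingle (0 : Fin (t'+2)) f, 1⟩ := by
        rw [mk_base_mul, ← Pi.mulSingle_mul]
      rw [hsplit]
      exact Subgroup.mul_mem _ (hswap a b hab) hf
  -- every single element at every coordinate
  have hallj : ∀ (j : Fin (t'+2)) (b : Equiv.Perm (Fin (k'+2))),
      (⟨Pi.mulSingle j b, 1⟩ : WreathSS (k'+2) (t'+2)) ∈ H := by
    intro j b
    rcases hsurj (Equiv.swap 0 j) with ⟨h, hh, hhr⟩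
    obtain ⟨f, σ⟩ := h
    simp only [SemidirectProduct.right] at hhr
    subst hhr
    have hconj2 := conj_mk f (Equiv.swap 0 j) (0 : Fin (t'+2))
      ((f (Equiv.swap 0 j 0))⁻¹ * b * (f (Equiv.swap 0 j 0)))
    have hs0 : Equiv.swap (0 : Fin (t'+2)) j 0 = j := Equiv.swap_apply_left 0 j
    have he : f (Equiv.swap (0 : Fin (t'+2)) j 0) *
        ((f (Equiv.swap (0 : Fin (t'+2)) j 0))⁻¹ * b * (f (Equiv.swap (0 : Fin (t'+2)) j 0))) *
        (f (Equiv.swap (0 : Fin (t'+2)) j 0))⁻¹ = b := by group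
    rw [he, hs0] at hconj2
    rw [← hconj2]
    exact Subgroup.mul_mem _ (Subgroup.mul_mem _ hh (hall0 _)) (Subgroup.inv_mem _ hh)
  -- the whole base group
  have hbase : ∀ f : Fin (t'+2) → Equiv.Perm (Fin (k'+2)),
      (⟨f, 1⟩ : WreathSS (k'+2) (t'+2)) ∈ H := by
    intro f
    have hrep := Finset.noncommProd_mulSingle f
    have : (⟨f, 1⟩ : WreathSS (k'+2) (t'+2)) = SemidirectProduct.inl f := rfl
    rw [this, ← hrep]
    erw [Finset.map_noncommProd]
    apply Subgroup.noncommProd_mem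
    intro i _
    exact hallj i (f i)
  -- finish
  rw [eq_top_iff]
  intro g _
  obtain ⟨f, σ0⟩ := g
  rcases hsurj σ0 with ⟨h, hh, hhr⟩
  obtain ⟨f2, σ2⟩ := h
  simp only [SemidirectProduct.right] at hhr
  subst hhr
  have hsplit : (⟨f, σ2⟩ : WreathSS (k'+2) (t'+2)) =
      (⟨f, σ2⟩ : WreathSS (k'+2) (t'+2)) * (⟨f2, σ2⟩ : WreathSS (k'+2) (t'+2))⁻¹ *
      (⟨f2, σ2⟩ : WreathSS (k'+2) (t'+2)) := by group
  have hr1 : ((⟨f, σ2⟩ : WreathSS (k'+2) (t'+2)) * (⟨f2, σ2⟩ : WreathSS (k'+2) (t'+2))⁻¹).right = 1 := by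
    rw [SemidirectProduct.mul_right, SemidirectProduct.inv_right]
    show σ2 * σ2⁻¹ = 1
    group
  set w := (⟨f, σ2⟩ : WreathSS (k'+2) (t'+2)) * (⟨f2, σ2⟩ : WreathSS (k'+2) (t'+2))⁻¹ with hw
  have hw2 : w = ⟨w.left, 1⟩ := by
    apply SemidirectProduct.ext
    · rfl
    · rw [← hr1]
  rw [hsplit]
  apply Subgroup.mul_mem
  · rw [hw2]
    exact hbase _
  · exact hh

-- a non-commuting pair
theorem noncomm :
    (⟨Pi.mulSingle (0 : Fin (t'+2)) (ττ k'), 1⟩ : WreathSS (k'+2) (t'+2)) * ⟨1, ss t'⟩ ≠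
    (⟨1, ss t'⟩ : WreathSS (k'+2) (t'+2)) * ⟨Pi.mulSingle (0 : Fin (t'+2)) (ττ k'), 1⟩ := by
  intro h
  have hl := congrArg SemidirectProduct.left h
  have h1 : ((⟨Pi.mulSingle (0 : Fin (t'+2)) (ττ k'), 1⟩ : WreathSS (k'+2) (t'+2)) * ⟨1, ss t'⟩).left
      = Pi.mulSingle (0 : Fin (t'+2)) (ττ k') := by
    rw [mk_mul, map_one, mul_one]
  have h2 : ((⟨1, ss t'⟩ : WreathSS (k'+2) (t'+2)) * ⟨Pi.mulSingle (0 : Fin (t'+2)) (ττ k'), 1⟩).left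
      = Pi.mulSingle (1 : Fin (t'+2)) (ττ k') := by
    rw [mk_mul, phi_mulSingle]
    have h0 : ss t' (0 : Fin (t'+2)) = 1 := Equiv.swap_apply_left 0 1
    rw [h0, one_mul]
  rw [h1, h2] at hl
  have := congrFun hl (0 : Fin (t'+2))
  have h01 : (0 : Fin (t'+2)) ≠ 1 := by rw [Ne, Fin.ext_iff]; simp
  rw [Pi.mulSingle_apply, Pi.mulSingle_apply, if_pos rfl, if_neg h01] at this
  have := congrArg (fun (p : Equiv.Perm (Fin (k'+2))) => p 0) this
  simp only [ττ, Equiv.swap_apply_left, Equiv.Perm.one_apply] at this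
  exact (by rw [Ne, Fin.ext_iff]; simp : (1 : Fin (k'+2)) ≠ 0) this

theorem dtau_ne_one :
    (⟨Pi.mulSingle (0 : Fin (t'+2)) (ττ k'), 1⟩ : WreathSS (k'+2) (t'+2)) ≠ 1 := by
  intro h
  have hl := congrArg SemidirectProduct.left h
  rw [SemidirectProduct.one_left] at hl
  have := congrFun hl (0 : Fin (t'+2))
  change (Pi.mulSingle (0 : Fin (t'+2)) (ττ k') : Fin (t'+2) → Equiv.Perm (Fin (k'+2))) 0
      = (1 : Fin (t'+2) → Equiv.Perm (Fin (k'+2))) 0 at this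
  rw [Pi.mulSingle_apply, if_pos rfl] at this
  have := congrArg (fun (p : Equiv.Perm (Fin (k'+2))) => p 0) this
  simp only [ττ, Equiv.swap_apply_left, Pi.one_apply, Equiv.Perm.one_apply] at this
  exact (by rw [Ne, Fin.ext_iff]; simp : (1 : Fin (k'+2)) ≠ 0) this

theorem xx_ne_yy : xx k' t' ≠ yy k' t' := by
  intro h
  have hset : ({xx k' t', yy k' t'} : Set (WreathSS (k'+2) (t'+2))) = {xx k' t'} := by
    rw [h]; exact Set.pair_eq_singleton _
  have htop : Subgroup.closure ({xx k' t'} : Set (WreathSS (k'+2) (t'+2))) = ⊤ := by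
    rw [← hset]; exact closure_top k' t'
  have hcomm : ∀ a b : WreathSS (k'+2) (t'+2), a * b = b * a := by
    intro a b
    have ha : a ∈ Subgroup.closure ({xx k' t'} : Set (WreathSS (k'+2) (t'+2))) := by
      rw [htop]; trivial
    have hb : b ∈ Subgroup.closure ({xx k' t'} : Set (WreathSS (k'+2) (t'+2))) := by
      rw [htop]; trivial
    rw [Subgroup.mem_closure_singleton] at ha hb
    obtain ⟨n1, rfl⟩ := ha
    obtain ⟨n2, rfl⟩ := hb
    exact ((Commute.refl (xx k' t')).zpow_zpow n1 n2).eq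
  exact noncomm k' t' (hcomm _ _)

end params
end WreathAux

theorem stmt_10 (k t : ℕ) (hk : 2 ≤ k) (ht : 2 ≤ t) :
    IsLeast {m | ∃ S : Finset (WreathSS k t),
      S.card = m ∧ Subgroup.closure (S : Set (WreathSS k t)) = ⊤} 2 := by
  obtain ⟨k', rfl⟩ : ∃ k', k = k'+2 := ⟨k-2, by omega⟩
  obtain ⟨t', rfl⟩ : ∃ t', t = t'+2 := ⟨t-2, by omega⟩
  constructor
  · refine ⟨{WreathAux.xx k' t', WreathAux.yy k' t'}, ?_, ?_⟩
    · exact Finset.card_pair (WreathAux.xx_ne_yy k' t')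
    · rw [Finset.coe_insert, Finset.coe_singleton]
      exact WreathAux.closure_top k' t'
  · rintro m ⟨S, hcard, hclos⟩
    by_contra hlt
    push_neg at hlt
    interval_cases m
    · rw [Finset.card_eq_zero] at hcard
      subst hcard
      rw [Finset.coe_empty, Subgroup.closure_empty] at hclos
      have := WreathAux.dtau_ne_one k' t'
      apply this
      have : (⟨Pi.mulSingle (0 : Fin (t'+2)) (WreathAux.ττ k'), 1⟩ : WreathSS (k'+2) (t'+2)) ∈
          (⊥ : Subgroup (WreathSS (k'+2) (t'+2))) := by
        rw [hclos]; trivial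
      exact Subgroup.mem_bot.mp this
    · rw [Finset.card_eq_one] at hcard
      obtain ⟨g, rfl⟩ := hcard
      rw [Finset.coe_singleton] at hclos
      have hcomm : ∀ a b : WreathSS (k'+2) (t'+2), a * b = b * a := by
        intro a b
        have ha : a ∈ Subgroup.closure ({g} : Set (WreathSS (k'+2) (t'+2))) := by
          rw [hclos]; trivial
        have hb : b ∈ Subgroup.closure ({g} : Set (WreathSS (k'+2) (t'+2))) := by
          rw [hclos]; trivial
        rw [Subgroup.mem_closure_singleton] at ha hb
        obtain ⟨n1, rfl⟩ := ha
        obtain ⟨n2, rfl⟩ := hb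
        exact ((Commute.refl g).zpow_zpow n1 n2).eq
      exact WreathAux.noncomm k' t' (hcomm _ _)
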